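/- Let R be a commutative domain of characteristic zero and δ : R → R a derivation. If the differential polynomial ring R[x;id_R,δ] is a simple ring, then R is a maximal commutative subring of R[x;id_R,δ]. -/

import Mathlib

/-- `δ` is a `σ`-derivation of `R`: it is additive and satisfies the twisted Leibniz rule
`δ(ab) = σ(a)δ(b) + δ(a)b`. -/
def IsSigmaDerivation {R : Type*} [Ring R] (σ : R →+* R) (δ : R → R) : Prop :=
  (∀ a b : R, δ (a + b) = δ a + δ b) ∧ ∀ a b : R, δ (a * b) = σ a * δ b + δ a * b

/-- `S`, together with the ring morphism `f : R →+* S` and the element `x : S`, is an Ore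
extension `R[x;σ,δ]`: the powers `1, x, x², …` form a basis of `S` as a left `R`-module
(i.e. every element of `S` is, in a unique way, a finite sum `Σᵢ f(aᵢ) xⁱ`), and the
commutation rule `x·r = σ(r)·x + δ(r)` holds for all `r ∈ R`. -/
structure IsOreExtension {R S : Type*} [Ring R] [Ring S]
    (σ : R →+* R) (δ : R → R) (f : R →+* S) (x : S) : Prop where
  basis : Function.Bijective fun a : ℕ →₀ R => a.sum fun i r => f r * x ^ i
  rel : ∀ r : R, x * f r = f (σ r) * x + f (δ r)

/-- `R` is `σ`-`δ`-simple: the only two-sided ideals `J` of `R` with `σ(J) ⊆ J` and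
`δ(J) ⊆ J` are `{0}` and `R`. -/
def IsSigmaDeltaSimple {R : Type*} [Ring R] (σ : R →+* R) (δ : R → R) : Prop :=
  ∀ J : TwoSidedIdeal R, (∀ a ∈ J, σ a ∈ J) → (∀ a ∈ J, δ a ∈ J) → J = ⊥ ∨ J = ⊤

/-- `R` is `δ`-simple: the only two-sided ideals `J` of `R` with `δ(J) ⊆ J` are `{0}`
and `R`. -/
def IsDeltaSimple {R : Type*} [Ring R] (δ : R → R) : Prop :=
  ∀ J : TwoSidedIdeal R, (∀ a ∈ J, δ a ∈ J) → J = ⊥ ∨ J = ⊤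


section Aux

variable {R S : Type*} [CommRing R] [Ring S]

/-- The canonical map `(ℕ →₀ R) → S` sending `a` to `Σ f(aᵢ) xⁱ`. -/
def phiMap (f : R →+* S) (x : S) : (ℕ →₀ R) → S := fun a => a.sum fun i r => f r * x ^ i

lemma phiMap_add (f : R →+* S) (x : S) (a b : ℕ →₀ R) :
    phiMap f x (a + b) = phiMap f x a + phiMap f x b := by
  unfold phiMap
  rw [Finsupp.sum_add_index'] <;> intros <;> simp [add_mul]

lemma phiMap_zero (f : R →+* S) (x : S) : phiMap f x 0 = 0 := by simp [phiMap]

lemma phiMap_single (f : R →+* S) (x : S) (i : ℕ) (r : R) :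
    phiMap f x (Finsupp.single i r) = f r * x ^ i := by
  simp [phiMap, Finsupp.sum_single_index]

lemma phiMap_smul (f : R →+* S) (x : S) (r : R) (a : ℕ →₀ R) :
    phiMap f x (r • a) = f r * phiMap f x a := by
  unfold phiMap
  rw [Finsupp.sum_smul_index' (by intro i; simp), Finsupp.mul_sum]
  simp [mul_assoc]

/-- The operation on coefficient sequences corresponding to left multiplication by `x`. -/
noncomputable def Tmap (δ : R → R) (hδ0 : δ 0 = 0) (c : ℕ →₀ R) : ℕ →₀ R :=
  Finsupp.mapDomain (· + 1) c + Finsupp.mapRange δ hδ0 c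

lemma Tmap_apply_zero (δ : R → R) (hδ0 : δ 0 = 0) (c : ℕ →₀ R) :
    Tmap δ hδ0 c 0 = δ (c 0) := by
  have h0 : (0 : ℕ) ∉ Set.range (· + 1 : ℕ → ℕ) := by simp
  simp [Tmap, Finsupp.mapDomain_notin_range _ _ h0]

lemma Tmap_apply_succ (δ : R → R) (hδ0 : δ 0 = 0) (c : ℕ →₀ R) (k : ℕ) :
    Tmap δ hδ0 c (k + 1) = c k + δ (c (k + 1)) := by
  have : Finsupp.mapDomain (· + 1 : ℕ → ℕ) c (k + 1) = c k :=
    Finsupp.mapDomain_apply (add_left_injective 1) c k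
  simp [Tmap, this]

lemma phiMap_mapDomain (f : R →+* S) (x : S) (c : ℕ →₀ R) :
    phiMap f x (Finsupp.mapDomain (· + 1) c) = c.sum fun i r => f r * x ^ (i + 1) := by
  unfold phiMap
  exact Finsupp.sum_mapDomain_index (by intros; simp) (by intros; simp [add_mul])

lemma x_mul_phiMap (δ : R → R) (hδ0 : δ 0 = 0) (f : R →+* S) (x : S)
    (hS : IsOreExtension (RingHom.id R) δ f x) (c : ℕ →₀ R) :
    x * phiMap f x c = phiMap f x (Tmap δ hδ0 c) := by
  rw [Tmap, phiMap_add, phiMap_mapDomain]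
  have h2 : phiMap f x (Finsupp.mapRange δ hδ0 c) = c.sum fun i r => f (δ r) * x ^ i := by
    unfold phiMap
    exact Finsupp.sum_mapRange_index (by intros; simp)
  rw [h2]
  unfold phiMap
  rw [Finsupp.mul_sum, ← Finsupp.sum_add]
  refine Finsupp.sum_congr fun i _ => ?_
  have := hS.rel (c i)
  simp only [RingHom.id_apply] at this
  rw [← mul_assoc, this, add_mul, mul_assoc, ← pow_succ']

lemma xpow_mul_f (δ : R → R) (hδ0 : δ 0 = 0) (f : R →+* S) (x : S)
    (hS : IsOreExtension (RingHom.id R) δ f x) (i : ℕ) (r : R) :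
    x ^ i * f r = phiMap f x ((Tmap δ hδ0)^[i] (Finsupp.single 0 r)) := by
  induction i with
  | zero => simp [phiMap_single]
  | succ n ih =>
    rw [Function.iterate_succ_apply', ← x_mul_phiMap δ hδ0 f x hS, ← ih, pow_succ', mul_assoc]

lemma D_apply_gt (δ : R → R) (hδ0 : δ 0 = 0) (r : R) :
    ∀ i k, i < k → (Tmap δ hδ0)^[i] (Finsupp.single 0 r) k = 0 := by
  intro i
  induction i with
  | zero => intro k hk; rw [Function.iterate_zero_apply, Finsupp.single_apply, if_neg (by omega)]
  | succ n ih =>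
    intro k hk
    rw [Function.iterate_succ_apply']
    obtain ⟨k', rfl⟩ : ∃ k', k = k' + 1 := ⟨k - 1, by omega⟩
    rw [Tmap_apply_succ, ih k' (by omega), ih (k' + 1) (by omega), hδ0, add_zero]

lemma D_apply_self (δ : R → R) (hδ0 : δ 0 = 0) (r : R) (i : ℕ) :
    (Tmap δ hδ0)^[i] (Finsupp.single 0 r) i = r := by
  induction i with
  | zero => simp
  | succ n ih =>
    rw [Function.iterate_succ_apply', Tmap_apply_succ, ih,
      D_apply_gt δ hδ0 r n (n + 1) (by omega), hδ0, add_zero]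

lemma D_apply_pred (δ : R → R) (hδ0 : δ 0 = 0) (r : R) (i : ℕ) :
    (Tmap δ hδ0)^[i + 1] (Finsupp.single 0 r) i = ((i : R) + 1) * δ r := by
  induction i with
  | zero => simp [Tmap_apply_zero]
  | succ n ih =>
    rw [Function.iterate_succ_apply', Tmap_apply_succ, ih, D_apply_self]
    push_cast
    ring

end Aux

/-- If `R` is a commutative domain of characteristic zero and `R[x;id,δ]` is simple,
then `R` is a maximal commutative subring of `R[x;id,δ]`. -/
theorem stmt_17 {R S : Type*} [CommRing R] [IsDomain R] [CharZero R] [Ring S] (δ : R → R)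
    (hδ : IsSigmaDerivation (RingHom.id R) δ) (f : R →+* S) (x : S)
    (hS : IsOreExtension (RingHom.id R) δ f x) (hsimple : IsSimpleRing S) :
    Subring.centralizer (Set.range f) = f.range := by
  have hδ0 : δ 0 = 0 := by
    have h := hδ.1 0 0
    rw [add_zero] at h
    exact left_eq_add.mp h
  ext s
  simp only [Subring.mem_centralizer_iff, RingHom.mem_range]
  constructor
  · intro hs
    obtain ⟨a, ha⟩ := hS.basis.surjective s
    have ha : phiMap f x a = s := ha
    -- the key commutation identity on coefficients
    have hcomm : ∀ r : R, r • a =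
        a.sum fun i c => c • (Tmap δ hδ0)^[i] (Finsupp.single 0 r) := by
      intro r
      apply hS.basis.injective
      show phiMap f x _ = phiMap f x _
      have h1 : phiMap f x (r • a) = f r * s := by rw [phiMap_smul, ha]
      have h2 : phiMap f x (a.sum fun i c => c • (Tmap δ hδ0)^[i] (Finsupp.single 0 r))
          = s * f r := by
        have hPhi : phiMap f x (a.sum fun i c => c • (Tmap δ hδ0)^[i] (Finsupp.single 0 r))
            = a.sum fun i c => phiMap f x (c • (Tmap δ hδ0)^[i] (Finsupp.single 0 r)) := by
          classical
          rw [Finsupp.sum, Finsupp.sum]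
          induction a.support using Finset.induction_on with
          | empty => simp [phiMap_zero]
          | insert _ _ h ih =>
            rw [Finset.sum_insert h, Finset.sum_insert h, phiMap_add, ih]
        rw [hPhi, ← ha]
        show _ = (a.sum fun i c => f c * x ^ i) * f r
        rw [Finsupp.sum_mul]
        exact Finsupp.sum_congr fun i hi => by
          rw [phiMap_smul, ← xpow_mul_f δ hδ0 f x hS, mul_assoc]
      rw [h1, h2, hs (f r) ⟨r, rfl⟩]
    by_cases h0 : a = 0
    · exact ⟨0, by rw [← ha, h0, phiMap_zero, map_zero]⟩
    have hne : a.support.Nonempty := Finsupp.support_nonempty_iff.mpr h0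
    set n := a.support.max' hne with hn
    have hnmem : n ∈ a.support := a.support.max'_mem hne
    have hmax : ∀ k ∈ a.support, k ≤ n := fun k hk => a.support.le_max' k hk
    match hne2 : n, hnmem, hmax with
    | 0, hnmem, hmax =>
      refine ⟨a 0, ?_⟩
      have : a = Finsupp.single 0 (a 0) := by
        ext k
        rcases Nat.eq_zero_or_pos k with rfl | hk
        · simp
        · rw [Finsupp.single_apply, if_neg (by omega)]
          by_contra hak
          have := hmax k (Finsupp.mem_support_iff.mpr hak)
          omega
      rw [← ha, this, phiMap_single, pow_zero, mul_one]
      simp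
    | (m+1), hnmem, hmax =>
      -- derive that δ is identically 0
      exfalso
      have hδr : ∀ r : R, δ r = 0 := by
        intro r
        have h := DFunLike.congr_fun (hcomm r) m
        rw [Finsupp.smul_apply, smul_eq_mul, Finsupp.sum_apply] at h
        have hsum : (a.sum fun i c => (c • (Tmap δ hδ0)^[i] (Finsupp.single 0 r)) m)
            = a m * r + a (m+1) * (((m : R) + 1) * δ r) := by
          classical
          have hF : ∀ i ∈ a.support ∪ {m, m+1},
              (fun i => (a i • (Tmap δ hδ0)^[i] (Finsupp.single 0 r)) m) i
              = (fun i => a i * ((Tmap δ hδ0)^[i] (Finsupp.single 0 r)) m) i := by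
            intro i _; simp
          rw [Finsupp.sum]
          have e1 : (∑ i ∈ a.support, (a i • (Tmap δ hδ0)^[i] (Finsupp.single 0 r)) m)
              = ∑ i ∈ a.support ∪ {m, m+1},
                  (a i • (Tmap δ hδ0)^[i] (Finsupp.single 0 r)) m := by
            refine Finset.sum_subset Finset.subset_union_left ?_
            intro i _ hi
            rw [Finsupp.notMem_support_iff.mp hi]
            simp
          have e2 : (∑ i ∈ ({m, m+1} : Finset ℕ),
                  (a i • (Tmap δ hδ0)^[i] (Finsupp.single 0 r)) m)
              = ∑ i ∈ a.support ∪ {m, m+1},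
                  (a i • (Tmap δ hδ0)^[i] (Finsupp.single 0 r)) m := by
            refine Finset.sum_subset Finset.subset_union_right ?_
            intro i hi hi2
            simp only [Finset.mem_insert, Finset.mem_singleton, not_or] at hi2
            have him : i ∈ a.support := by
              rcases Finset.mem_union.mp hi with h | h
              · exact h
              · exfalso; simp only [Finset.mem_insert, Finset.mem_singleton] at h; tauto
            have : i ≤ m + 1 := hmax i him
            have hilt : i < m := by omega
            rw [Finsupp.smul_apply, D_apply_gt δ hδ0 r i m hilt, smul_zero]
          rw [e1, ← e2, Finset.sum_pair (by omega : m ≠ m + 1)]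
          rw [Finsupp.smul_apply, Finsupp.smul_apply, D_apply_self, D_apply_pred]
          simp [smul_eq_mul]
        rw [hsum, mul_comm r (a m)] at h
        have hz : a (m+1) * (((m : R) + 1) * δ r) = 0 := left_eq_add.mp h
        rcases mul_eq_zero.mp hz with h1 | h1
        · exact absurd h1 (Finsupp.mem_support_iff.mp hnmem)
        rcases mul_eq_zero.mp h1 with h2 | h2
        · exact absurd h2 (Nat.cast_add_one_ne_zero m)
        · exact h2
      -- with δ = 0, x ⋅ S is a proper nonzero two-sided ideal
      have hTshift : ∀ c : ℕ →₀ R, Tmap δ hδ0 c = Finsupp.mapDomain (· + 1) c := by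
        intro c
        ext k
        cases k with
        | zero =>
          rw [Tmap_apply_zero, hδr,
            Finsupp.mapDomain_notin_range _ _ (by simp : (0:ℕ) ∉ Set.range (· + 1 : ℕ → ℕ))]
        | succ k =>
          rw [Tmap_apply_succ, hδr, add_zero,
            Finsupp.mapDomain_apply (add_left_injective 1)]
      have hxne : x ≠ 0 := by
        intro hx
        have : phiMap f x (Finsupp.single 1 1) = phiMap f x 0 := by
          rw [phiMap_single, phiMap_zero, hx]; simp
        have := hS.basis.injective this
        have := DFunLike.congr_fun this 1
        simp at this
      have hxcentral : ∀ t : S, x * t = t * x := by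
        intro t
        obtain ⟨b, hb⟩ := hS.basis.surjective t
        have hb : phiMap f x b = t := hb
        rw [← hb, x_mul_phiMap δ hδ0 f x hS, hTshift, phiMap_mapDomain]
        unfold phiMap
        rw [Finsupp.sum_mul]
        refine Finsupp.sum_congr fun i hi => ?_
        rw [mul_assoc, ← pow_succ]
      classical
      set J : TwoSidedIdeal S := TwoSidedIdeal.mk' {t | ∃ u, t = x * u}
        ⟨0, by rw [mul_zero]⟩
        (fun ⟨u, hu⟩ ⟨v, hv⟩ => ⟨u + v, by rw [hu, hv, mul_add]⟩)
        (fun ⟨u, hu⟩ => ⟨-u, by rw [hu, mul_neg]⟩)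
        (fun {y t} ⟨u, hu⟩ => ⟨y * u, by rw [hu, ← mul_assoc, ← hxcentral y, mul_assoc]⟩)
        (fun {t y} ⟨u, hu⟩ => ⟨u * y, by rw [hu, mul_assoc]⟩) with hJ
      rcases hsimple.simple.eq_bot_or_eq_top J with hbot | htop
      · have hxJ : x ∈ J := by
          rw [hJ, TwoSidedIdeal.mem_mk']
          exact ⟨1, by rw [mul_one]⟩
        rw [hbot, TwoSidedIdeal.mem_bot] at hxJ
        exact hxne hxJ
      · have h1J : (1 : S) ∈ J := by rw [htop]; exact TwoSidedIdeal.mem_top _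
        rw [hJ, TwoSidedIdeal.mem_mk'] at h1J
        obtain ⟨u, hu⟩ := h1J
        obtain ⟨b, hb⟩ := hS.basis.surjective u
        have hb : phiMap f x b = u := hb
        have : phiMap f x (Finsupp.single 0 1) = phiMap f x (Finsupp.mapDomain (· + 1) b) := by
          rw [phiMap_single, pow_zero, map_one, one_mul, ← hTshift,
            ← x_mul_phiMap δ hδ0 f x hS, hb, ← hu]
        have := DFunLike.congr_fun (hS.basis.injective this) 0
        rw [Finsupp.mapDomain_notin_range _ _
          (by simp : (0:ℕ) ∉ Set.range (· + 1 : ℕ → ℕ))] at this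
        simp at this
  · rintro ⟨r, rfl⟩ g ⟨r', rfl⟩
    rw [← map_mul, ← map_mul, mul_comm]
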